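/- Let K ⊂ ℝ² be the attractor of the IFS with the 8 maps f_i(x,y) = (x/2, y/4) + t_i where t_i ∈ {(0,k/4) : k=0,1,2,3} ∪ {(1/2,k/4) : k=0,1,2,3} (so K = [0,1]²). Level n of the natural fractal structure consists of 8^n rectangles of dimensions 2^{−n} × 2^{−2n}, each of diameter √((1+2^{2n})/2^{4n}), and lim_{n→∞} log 8^n / (−log √((1+2^{2n})/2^{4n})) = 3. -/

import Mathlib

open Filter Real

/-- Fractal dimension II of the unit square with the natural fractal structure
coming from the IFS of 8 maps `(x,y) ↦ (x/2, y/4) + t_i`: level `n` consists of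
`8^n` rectangles of size `2^{-n} × 2^{-2n}`, each of diameter
`√((1 + 2^{2n}) / 2^{4n})`, and `lim log 8^n / (-log δ_n) = 3`. -/
theorem stmt_17 :
    Filter.Tendsto
      (fun n : ℕ => Real.log ((8 : ℝ) ^ n) /
        (-Real.log (Real.sqrt ((1 + 2 ^ (2 * n)) / 2 ^ (4 * n)))))
      Filter.atTop (nhds 3) := by
  have h2 : (0:ℝ) < Real.log 2 := Real.log_pos (by norm_num)
  have hpow : Tendsto (fun n : ℕ => ((1:ℝ)/4) ^ n) atTop (nhds 0) :=
    tendsto_pow_atTop_nhds_zero_of_lt_one (by norm_num) (by norm_num)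
  have hnum : Tendsto (fun n : ℕ => Real.log (1 + (1/4:ℝ)^n)) atTop (nhds 0) := by
    have h1 : Tendsto (fun n : ℕ => 1 + (1/4:ℝ)^n) atTop (nhds 1) := by
      simpa using tendsto_const_nhds.add hpow
    have := ((Real.continuousAt_log (by norm_num)).tendsto).comp h1
    simpa [Function.comp_def] using this
  have hden : Tendsto (fun n : ℕ => 2 * (n:ℝ) * Real.log 2) atTop atTop := by
    apply Tendsto.atTop_mul_const h2
    exact tendsto_natCast_atTop_atTop.const_mul_atTop (by norm_num)
  have hh : Tendsto (fun n : ℕ =>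
      Real.log (1 + (1/4:ℝ)^n) / (2 * (n:ℝ) * Real.log 2)) atTop (nhds 0) :=
    hnum.div_atTop hden
  have key : Tendsto (fun n : ℕ =>
      3 / (1 - Real.log (1 + (1/4:ℝ)^n) / (2 * (n:ℝ) * Real.log 2))) atTop (nhds 3) := by
    have h1 : Tendsto (fun n : ℕ =>
        1 - Real.log (1 + (1/4:ℝ)^n) / (2 * (n:ℝ) * Real.log 2)) atTop (nhds 1) := by
      simpa using tendsto_const_nhds.sub hh
    simpa [Pi.div_def] using (tendsto_const_nhds.div h1 (by norm_num))
  refine key.congr' ?_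
  filter_upwards [eventually_ge_atTop 1] with n hn
  have hn' : (1:ℝ) ≤ (n:ℝ) := by exact_mod_cast hn
  set L := Real.log 2 with hLdef
  set a := Real.log (1 + (1/4:ℝ)^n) with ha
  have ha0 : 0 ≤ a := Real.log_nonneg (le_add_of_nonneg_right (by positivity))
  have ha2 : a ≤ L := by
    rw [ha, hLdef]
    apply Real.log_le_log (by positivity)
    have : ((1:ℝ)/4)^n ≤ 1 := pow_le_one₀ (by norm_num) (by norm_num)
    linarith
  have hone : ((2:ℝ)^(2*n)) * ((1:ℝ)/4)^n = 1 := by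
    rw [pow_mul, ← mul_pow]; norm_num
  have hfact : (1:ℝ) + 2^(2*n) = 2^(2*n) * (1 + (1/4:ℝ)^n) := by
    rw [mul_add, mul_one, hone]; ring
  have hlog1 : Real.log (1 + (2:ℝ)^(2*n)) = 2*(n:ℝ)*L + a := by
    rw [hfact, Real.log_mul (by positivity) (by positivity), Real.log_pow]
    push_cast; ring
  have hx : (0:ℝ) ≤ (1 + 2 ^ (2*n)) / 2 ^ (4*n) := by positivity
  have hlogs : Real.log (Real.sqrt ((1 + (2:ℝ) ^ (2*n)) / 2 ^ (4*n)))
      = (2*(n:ℝ)*L + a - 4*(n:ℝ)*L)/2 := by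
    rw [Real.log_sqrt hx, Real.log_div (by positivity) (by positivity), hlog1,
      Real.log_pow]
    push_cast; ring
  have hlog8 : Real.log ((8:ℝ)^n) = 3*(n:ℝ)*L := by
    have h8 : (8:ℝ) = 2^3 := by norm_num
    rw [Real.log_pow, h8, Real.log_pow]
    push_cast; ring
  have hA : a < 2*(n:ℝ)*L := by nlinarith
  have hnL : (0:ℝ) < 2*(n:ℝ)*L := by nlinarith
  have h1 : 1 - a/(2*(n:ℝ)*L) ≠ 0 := by
    have : a/(2*(n:ℝ)*L) < 1 := (div_lt_one hnL).2 hA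
    linarith
  show 3 / (1 - a / (2 * (n:ℝ) * L)) = Real.log ((8:ℝ)^n) /
      (-Real.log (Real.sqrt ((1 + (2:ℝ) ^ (2*n)) / 2 ^ (4*n))))
  rw [hlog8, hlogs]
  have hD : -((2*(n:ℝ)*L + a - 4*(n:ℝ)*L)/2) ≠ 0 := by
    intro h; nlinarith [hA]
  field_simp
  rw [← div_neg]; ring
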